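/- For every 3×3 real matrix F with det F > 0 and every 3×3 real matrix L, the map t ↦ σ_vol((I + tL)·F) is differentiable at t = 0, and its derivative σ̇ there satisfies σ̇ = L·σ_vol(F) + σ_vol(F)·Lᵀ − tr(L)·σ_vol(F) + D_vol(F) : e, where e = (L + Lᵀ)/2, (D_vol(F) : e)_{ij} = Σ_{k,l} D_vol(F)_{ijkl} e_{kl}, and D_vol(F)_{ijkl} = K(2J − 1)δ_{ij}δ_{kl} − K(J − 1)(δ_{ik}δ_{lj} + δ_{il}δ_{jk}). -/

import Mathlib

open Matrix

/-- Kronecker delta on `Fin 3`. -/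
def kdelta (i j : Fin 3) : ℝ := if i = j then 1 else 0

/-- Volumetric part of the neo-Hookean Cauchy stress: `σ_vol(F) = K(J − 1)·I`. -/
noncomputable def nhSigmaVol (K : ℝ) (F : Matrix (Fin 3) (Fin 3) ℝ) :
    Matrix (Fin 3) (Fin 3) ℝ :=
  (K * (F.det - 1)) • (1 : Matrix (Fin 3) (Fin 3) ℝ)

/-- Volumetric part of the tangent stiffness tensor:
`D_vol(F)_{ijkl} = K(2J − 1)δ_{ij}δ_{kl} − K(J − 1)(δ_{ik}δ_{lj} + δ_{il}δ_{jk})`. -/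
noncomputable def nhDVol (K : ℝ) (F : Matrix (Fin 3) (Fin 3) ℝ) (i j k l : Fin 3) : ℝ :=
  K * (2 * F.det - 1) * kdelta i j * kdelta k l
    - K * (F.det - 1) * (kdelta i k * kdelta l j + kdelta i l * kdelta j k)

attribute [local instance] Matrix.normedAddCommGroup Matrix.normedSpace

lemma det_one_add_smul_hasDerivAt (L : Matrix (Fin 3) (Fin 3) ℝ) :
    HasDerivAt (fun t : ℝ => ((1 + t • L) : Matrix (Fin 3) (Fin 3) ℝ).det) L.trace 0 := by
  have h : ∀ t : ℝ, ((1 + t • L) : Matrix (Fin 3) (Fin 3) ℝ).det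
      = 1 + L.trace * t
        + (Matrix.det (1 + (Polynomial.X : Polynomial ℝ) • L.map Polynomial.C)).divX.divX.eval t
          * t ^ 2 := fun t => Matrix.det_one_add_smul t L
  rw [show (fun t : ℝ => ((1 + t • L) : Matrix (Fin 3) (Fin 3) ℝ).det) = _ from funext h]
  have h1 : HasDerivAt (fun t : ℝ => 1 + L.trace * t) L.trace 0 := by
    simpa using ((hasDerivAt_id (0:ℝ)).const_mul L.trace).const_add 1
  have h2 : HasDerivAt (fun t : ℝ =>
      (Matrix.det (1 + (Polynomial.X : Polynomial ℝ) • L.map Polynomial.C)).divX.divX.eval t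
        * t ^ 2) 0 0 := by
    have hp := Polynomial.hasDerivAt
      (Matrix.det (1 + (Polynomial.X : Polynomial ℝ) • L.map Polynomial.C)).divX.divX (0:ℝ)
    have hq : HasDerivAt (fun t : ℝ => t ^ 2) 0 (0:ℝ) := by
      simpa using hasDerivAt_pow 2 (0:ℝ)
    have := hp.mul hq
    simp at this
    exact this
  have := h1.add h2
  simp at this
  exact this

/-- the map `t ↦ σ_vol((I + tL)·F)` is differentiable at `t = 0` and its
derivative there equals `L·σ_vol + σ_vol·Lᵀ − tr(L)·σ_vol + D_vol(F) : e`,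
with `e = (L + Lᵀ)/2`. -/
theorem nhSigmaVol_truesdell_rate (K : ℝ) (F L : Matrix (Fin 3) (Fin 3) ℝ)
    (hF : 0 < F.det) :
    HasDerivAt (fun t : ℝ => nhSigmaVol K ((1 + t • L) * F))
      (L * nhSigmaVol K F + nhSigmaVol K F * Lᵀ - L.trace • nhSigmaVol K F
        + Matrix.of fun i j =>
            ∑ k, ∑ l, nhDVol K F i j k l * (((1 : ℝ)/2) • (L + Lᵀ)) k l) 0 := by
  have key : HasDerivAt (fun t : ℝ => nhSigmaVol K ((1 + t • L) * F))
      ((K * F.det * L.trace) • (1 : Matrix (Fin 3) (Fin 3) ℝ)) 0 := by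
    have hdet : HasDerivAt (fun t : ℝ => K * (((1 + t • L) * F).det - 1))
        (K * F.det * L.trace) 0 := by
      have := ((det_one_add_smul_hasDerivAt L).mul_const F.det).sub_const 1
      have h2 := this.const_mul K
      simp only [← Matrix.det_mul] at h2
      exact h2.congr_deriv (by ring)
    unfold nhSigmaVol
    exact hdet.smul_const (1 : Matrix (Fin 3) (Fin 3) ℝ)
  convert key using 1
  ext i j
  simp only [nhSigmaVol, nhDVol, kdelta, Matrix.add_apply, Matrix.sub_apply, Matrix.smul_apply,
    Matrix.mul_apply, Matrix.of_apply, Matrix.one_apply, Matrix.transpose_apply,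
    Fin.sum_univ_three, smul_eq_mul, Matrix.trace_fin_three]
  fin_cases i <;> fin_cases j <;> simp <;> ring
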